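/- Let Π be an sl(2,ℂ)-module with Casimir eigenvalue λ² - 1, λ ∉ {0, -δ}, δ ∈ {+1,-1}, such that Π ⊗ ℂ³ decomposes into Casimir eigenspaces with eigenvalues (λ+2)²-1, λ²-1, (λ-2)²-1. If T: Π → ℂ_ν satisfies T(Hu) = νT(u), then for all u ∈ Π, (T ⊗ pr_{F→F'}) ∘ pr_{λ→λ+2δ}(u ⊗ H) = ((λ+δ)² - ν²)/(2λ(λ+δ)) · Tu, where pr_{λ→λ+2δ} is the projection onto the Casimir eigenspace with eigenvalue (λ+2δ)² - 1 and pr_{F→F'} projects the adjoint representation ℂ³ onto ℂH ≅ ℂ. -/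

import Mathlib

open scoped TensorProduct

noncomputable section

/-- A (not necessarily bracket-compatible) action of the generators `H, X, Y`
of `sl(2,ℂ)` on a complex vector space. -/
structure SL2Rep (V : Type*) [AddCommGroup V] [Module ℂ V] where
  H : Module.End ℂ V
  X : Module.End ℂ V
  Y : Module.End ℂ V

namespace SL2Rep

variable {V W : Type*} [AddCommGroup V] [Module ℂ V] [AddCommGroup W] [Module ℂ W]

/-- The defining relations of an `sl₂`-triple. -/
def IsSl2Rep (ρ : SL2Rep V) : Prop :=
  ρ.H ∘ₗ ρ.X - ρ.X ∘ₗ ρ.H = (2:ℂ) • ρ.X ∧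
  ρ.H ∘ₗ ρ.Y - ρ.Y ∘ₗ ρ.H = (-2:ℂ) • ρ.Y ∧
  ρ.X ∘ₗ ρ.Y - ρ.Y ∘ₗ ρ.X = ρ.H

/-- The Casimir operator `Ω = H² + 2(XY + YX)`. -/
def casimir (ρ : SL2Rep V) : Module.End ℂ V :=
  ρ.H ∘ₗ ρ.H + (2:ℂ) • (ρ.X ∘ₗ ρ.Y + ρ.Y ∘ₗ ρ.X)

/-- The diagonal (coproduct) action on a tensor product. -/
def tensor (ρ : SL2Rep V) (σ : SL2Rep W) : SL2Rep (V ⊗[ℂ] W) where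
  H := TensorProduct.map ρ.H LinearMap.id + TensorProduct.map LinearMap.id σ.H
  X := TensorProduct.map ρ.X LinearMap.id + TensorProduct.map LinearMap.id σ.X
  Y := TensorProduct.map ρ.Y LinearMap.id + TensorProduct.map LinearMap.id σ.Y

end SL2Rep

/-- Matrix of `H` on the standard basis of the irreducible `(m+1)`-dimensional module. -/
def Hmat (m : ℕ) : Matrix (Fin (m+1)) (Fin (m+1)) ℂ :=
  Matrix.of fun i j => if i = j then ((m:ℂ) - 2 * ((i:ℕ):ℂ)) else 0

/-- Matrix of `X` (raising operator): `X e_j = j (m+1-j) e_(j-1)`. -/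
def Xmat (m : ℕ) : Matrix (Fin (m+1)) (Fin (m+1)) ℂ :=
  Matrix.of fun i j => if (j:ℕ) = (i:ℕ) + 1 then ((j:ℕ):ℂ) * ((m:ℂ) + 1 - ((j:ℕ):ℂ)) else 0

/-- Matrix of `Y` (lowering operator): `Y e_j = e_(j+1)`. -/
def Ymat (m : ℕ) : Matrix (Fin (m+1)) (Fin (m+1)) ℂ :=
  Matrix.of fun i j => if (i:ℕ) = (j:ℕ) + 1 then 1 else 0

/-- The irreducible `(m+1)`-dimensional representation `V_m` of `sl(2,ℂ)`. -/
def stdRep (m : ℕ) : SL2Rep (Fin (m+1) → ℂ) :=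
  ⟨Matrix.toLin' (Hmat m), Matrix.toLin' (Xmat m), Matrix.toLin' (Ymat m)⟩

/-- The element `H ∈ ℂ³ = sl(2,ℂ)` (adjoint representation), in the basis `(X, H, Y)`. -/
def Hvec : Fin 3 → ℂ := Pi.single 1 1

/-- The adjoint representation of `sl(2,ℂ)` on `ℂ³`, in the basis `(X, H, Y)`. -/
def adRep : SL2Rep (Fin 3 → ℂ) :=
  ⟨Matrix.toLin' !![(2:ℂ),0,0; 0,0,0; 0,0,-2],
   Matrix.toLin' !![(0:ℂ),-2,0; 0,0,1; 0,0,0],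
   Matrix.toLin' !![(0:ℂ),0,0; -1,0,0; 0,2,0]⟩

/-- The projection `pr_{F→F'} : ℂ³ = ℂX ⊕ ℂH ⊕ ℂY → ℂH ≅ ℂ`. -/
def prFF' : (Fin 3 → ℂ) →ₗ[ℂ] ℂ := LinearMap.proj 1

-- auxiliary
def E0 : Fin 3 → ℂ := Pi.single 0 1
def E2 : Fin 3 → ℂ := Pi.single 2 1

lemma adH_Hvec : adRep.H Hvec = 0 := by
  funext i; fin_cases i <;>
    simp [adRep, Hvec, E0, E2, Matrix.toLin'_apply, Matrix.mulVec, dotProduct,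
      Fin.sum_univ_three, Pi.single_apply]

lemma adX_Hvec : adRep.X Hvec = (-2:ℂ) • E0 := by
  funext i; fin_cases i <;>
    simp [adRep, Hvec, E0, E2, Matrix.toLin'_apply, Matrix.mulVec, dotProduct,
      Fin.sum_univ_three, Pi.single_apply]

lemma adY_Hvec : adRep.Y Hvec = (2:ℂ) • E2 := by
  funext i; fin_cases i <;>
    simp [adRep, Hvec, E0, E2, Matrix.toLin'_apply, Matrix.mulVec, dotProduct,
      Fin.sum_univ_three, Pi.single_apply]

lemma adH_E0 : adRep.H E0 = (2:ℂ) • E0 := by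
  funext i; fin_cases i <;>
    simp [adRep, Hvec, E0, E2, Matrix.toLin'_apply, Matrix.mulVec, dotProduct,
      Fin.sum_univ_three, Pi.single_apply]

lemma adX_E0 : adRep.X E0 = 0 := by
  funext i; fin_cases i <;>
    simp [adRep, Hvec, E0, E2, Matrix.toLin'_apply, Matrix.mulVec, dotProduct,
      Fin.sum_univ_three, Pi.single_apply]

lemma adY_E0 : adRep.Y E0 = (-1:ℂ) • Hvec := by
  funext i; fin_cases i <;>
    simp [adRep, Hvec, E0, E2, Matrix.toLin'_apply, Matrix.mulVec, dotProduct,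
      Fin.sum_univ_three, Pi.single_apply]

lemma adH_E2 : adRep.H E2 = (-2:ℂ) • E2 := by
  funext i; fin_cases i <;>
    simp [adRep, Hvec, E0, E2, Matrix.toLin'_apply, Matrix.mulVec, dotProduct,
      Fin.sum_univ_three, Pi.single_apply]

lemma adX_E2 : adRep.X E2 = Hvec := by
  funext i; fin_cases i <;>
    simp [adRep, Hvec, E0, E2, Matrix.toLin'_apply, Matrix.mulVec, dotProduct,
      Fin.sum_univ_three, Pi.single_apply]

lemma adY_E2 : adRep.Y E2 = 0 := by
  funext i; fin_cases i <;>
    simp [adRep, Hvec, E0, E2, Matrix.toLin'_apply, Matrix.mulVec, dotProduct,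
      Fin.sum_univ_three, Pi.single_apply]

lemma adcas_Hvec : adRep.casimir Hvec = (8:ℂ) • Hvec := by
  simp only [SL2Rep.casimir, LinearMap.add_apply, LinearMap.comp_apply, LinearMap.smul_apply,
    adH_Hvec, adX_Hvec, adY_Hvec, map_smul, adX_E2, adY_E0, map_zero, adH_E0, adH_E2]
  module

lemma adcas_E0 : adRep.casimir E0 = (8:ℂ) • E0 := by
  simp only [SL2Rep.casimir, LinearMap.add_apply, LinearMap.comp_apply, LinearMap.smul_apply,
    adH_E0, adX_E0, adY_E0, adX_Hvec, adY_Hvec, adH_Hvec, map_smul, map_zero, map_neg, neg_smul,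
    one_smul, smul_smul]
  module

lemma adcas_E2 : adRep.casimir E2 = (8:ℂ) • E2 := by
  simp only [SL2Rep.casimir, LinearMap.add_apply, LinearMap.comp_apply, LinearMap.smul_apply,
    adH_E2, adX_E2, adY_E2, adX_Hvec, adY_Hvec, adH_Hvec, map_smul, map_zero, smul_smul]
  module

lemma prFF'_Hvec : prFF' Hvec = 1 := by simp [prFF', Hvec]
lemma prFF'_E0 : prFF' E0 = 0 := by simp [prFF', E0, Pi.single_apply]
lemma prFF'_E2 : prFF' E2 = 0 := by simp [prFF', E2, Pi.single_apply]

lemma cas_tmul {V W : Type*} [AddCommGroup V] [Module ℂ V] [AddCommGroup W] [Module ℂ W]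
    (ρ : SL2Rep V) (σ : SL2Rep W) (v : V) (f : W) :
    (ρ.tensor σ).casimir (v ⊗ₜ f) =
      (ρ.casimir v) ⊗ₜ f + v ⊗ₜ (σ.casimir f)
      + (4:ℂ) • (ρ.X v ⊗ₜ σ.Y f) + (4:ℂ) • (ρ.Y v ⊗ₜ σ.X f)
      + (2:ℂ) • (ρ.H v ⊗ₜ σ.H f) := by
  simp only [SL2Rep.casimir, SL2Rep.tensor, LinearMap.add_apply, LinearMap.comp_apply,
    LinearMap.smul_apply, TensorProduct.map_tmul, LinearMap.id_coe, id_eq, map_add, map_smul,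
    TensorProduct.tmul_add, TensorProduct.add_tmul, TensorProduct.tmul_smul,
    ← TensorProduct.smul_tmul']
  module

lemma key {V : Type*} [AddCommGroup V] [Module ℂ V]
    (ρ : SL2Rep V) (lam ν delta : ℂ)
    (hdelta : delta = 1 ∨ delta = -1) (hlam0 : lam ≠ 0) (hlamd : lam + delta ≠ 0)
    (hcas : ρ.casimir = (lam^2 - 1) • (1 : Module.End ℂ V))
    (Pa Pb Pc : Module.End ℂ (V ⊗[ℂ] (Fin 3 → ℂ)))
    (hsum : Pa + Pb + Pc = 1)
    (hca : (ρ.tensor adRep).casimir ∘ₗ Pa = ((lam+2*delta)^2 - 1) • Pa)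
    (hcb : (ρ.tensor adRep).casimir ∘ₗ Pb = (lam^2 - 1) • Pb)
    (hcc : (ρ.tensor adRep).casimir ∘ₗ Pc = ((lam-2*delta)^2 - 1) • Pc)
    (T : V →ₗ[ℂ] ℂ) (hT : ∀ u, T (ρ.H u) = ν * T u) (u : V) :
    TensorProduct.map T prFF' (Pa (u ⊗ₜ[ℂ] Hvec))
      = (((lam + delta)^2 - ν^2) / (2 * lam * (lam + delta)))
          • ((T u) ⊗ₜ[ℂ] (1:ℂ)) := by
  have hd0 : delta ≠ 0 := by rcases hdelta with h | h <;> subst h <;> norm_num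
  set S : (V ⊗[ℂ] (Fin 3 → ℂ)) →ₗ[ℂ] (ℂ ⊗[ℂ] ℂ) := TensorProduct.map T prFF' with hS
  set Ω : Module.End ℂ (V ⊗[ℂ] (Fin 3 → ℂ)) := (ρ.tensor adRep).casimir with hΩ
  set μa : ℂ := (lam+2*delta)^2 - 1 with hμa
  set μb : ℂ := lam^2 - 1 with hμb
  set μc : ℂ := (lam-2*delta)^2 - 1 with hμc
  set w : V ⊗[ℂ] (Fin 3 → ℂ) := u ⊗ₜ[ℂ] Hvec with hwdef
  -- projections behaviour
  have hΩa : ∀ x, Ω (Pa x) = μa • Pa x := fun x => by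
    simpa using DFunLike.congr_fun hca x
  have hΩb : ∀ x, Ω (Pb x) = μb • Pb x := fun x => by
    simpa using DFunLike.congr_fun hcb x
  have hΩc : ∀ x, Ω (Pc x) = μc • Pc x := fun x => by
    simpa using DFunLike.congr_fun hcc x
  have hw : w = Pa w + Pb w + Pc w := by
    simpa [LinearMap.add_apply] using (DFunLike.congr_fun hsum w).symm
  have h1 : Ω w = μa • Pa w + μb • Pb w + μc • Pc w := by
    conv_lhs => rw [hw]
    simp [map_add, hΩa, hΩb, hΩc]
  have h2 : Ω (Ω w) = (μa*μa) • Pa w + (μb*μb) • Pb w + (μc*μc) • Pc w := by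
    rw [h1]
    simp [map_add, map_smul, hΩa, hΩb, hΩc, smul_smul]
  have hcombo : Ω (Ω w) - (μb+μc) • Ω w + (μb*μc) • (Pa w + Pb w + Pc w)
      = ((μa-μb)*(μa-μc)) • Pa w := by
    rw [h2, h1]; module
  have h1' : μa - μb = 4*delta*(lam+delta) := by
    rcases hdelta with h | h <;> subst h <;> (rw [hμa, hμb]; ring)
  have h2' : μa - μc = 8*delta*lam := by
    rcases hdelta with h | h <;> subst h <;> (rw [hμa, hμc]; ring)
  have hne : ((μa-μb)*(μa-μc)) ≠ 0 := by
    rw [h1', h2']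
    exact mul_ne_zero (mul_ne_zero (mul_ne_zero (by norm_num) hd0) hlamd)
      (mul_ne_zero (mul_ne_zero (by norm_num) hd0) hlam0)
  have hPa : Pa w = (((μa-μb)*(μa-μc))⁻¹)
      • (Ω (Ω w) - (μb+μc) • Ω w + (μb*μc) • w) := by
    rw [show (μb*μc) • w = (μb*μc) • (Pa w + Pb w + Pc w) from by rw [← hw]]
    rw [hcombo, smul_smul, inv_mul_cancel₀ hne, one_smul]
  rw [h1', h2'] at hPa
  -- explicit S values
  have hS1 : ∀ v : V, S (v ⊗ₜ[ℂ] Hvec) = T v ⊗ₜ[ℂ] (1:ℂ) := fun v => by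
    simp [hS, TensorProduct.map_tmul, prFF'_Hvec]
  have hSE0 : ∀ v : V, S (v ⊗ₜ[ℂ] E0) = 0 := fun v => by
    simp [hS, TensorProduct.map_tmul, prFF'_E0]
  have hSE2 : ∀ v : V, S (v ⊗ₜ[ℂ] E2) = 0 := fun v => by
    simp [hS, TensorProduct.map_tmul, prFF'_E2]
  -- Ω on the pure tensor
  have hcasu : ∀ v : V, ρ.casimir v = (lam^2-1) • v := fun v => by
    rw [hcas]; simp [hμb]
  have hΩw : Ω w = (lam^2+7) • w + (8:ℂ) • (ρ.X u ⊗ₜ[ℂ] E2)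
      + (-8:ℂ) • (ρ.Y u ⊗ₜ[ℂ] E0) := by
    rw [hΩ, hwdef, cas_tmul, hcasu, adcas_Hvec, adX_Hvec, adY_Hvec, adH_Hvec]
    simp only [TensorProduct.tmul_smul, ← TensorProduct.smul_tmul', TensorProduct.tmul_zero,
      smul_zero]
    module
  have hSΩw : S (Ω w) = (lam^2+7) • (T u ⊗ₜ[ℂ] (1:ℂ)) := by
    rw [hΩw]
    simp [map_add, map_smul, hS1, hSE0, hSE2, hwdef]
  have hSw : S w = T u ⊗ₜ[ℂ] (1:ℂ) := hS1 u
  -- second application of Ω, composed with S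
  have hSΩE2 : ∀ v : V, S (Ω (v ⊗ₜ[ℂ] E2)) = (4:ℂ) • (T (ρ.Y v) ⊗ₜ[ℂ] (1:ℂ)) := fun v => by
    rw [hΩ, cas_tmul, hcasu, adcas_E2]
    simp [adX_E2, adY_E2, adH_E2, map_add, map_smul, hS1, hSE0, hSE2, map_neg,
      TensorProduct.tmul_smul, TensorProduct.tmul_zero, TensorProduct.tmul_neg, smul_smul]
  have hSΩE0 : ∀ v : V, S (Ω (v ⊗ₜ[ℂ] E0)) = (-4:ℂ) • (T (ρ.X v) ⊗ₜ[ℂ] (1:ℂ)) := fun v => by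
    rw [hΩ, cas_tmul, hcasu, adcas_E0]
    simp [adX_E0, adY_E0, adH_E0, map_add, map_smul, hS1, hSE0, hSE2, map_neg, neg_smul,
      TensorProduct.tmul_smul, TensorProduct.tmul_zero, TensorProduct.tmul_neg, smul_smul]
  -- Casimir relation under T
  have hTcas : T (ρ.X (ρ.Y u)) + T (ρ.Y (ρ.X u))
      = ((lam^2 - 1) * T u - ν * (ν * T u)) / 2 := by
    have h := congrArg T (hcasu u)
    simp only [SL2Rep.casimir, LinearMap.add_apply, LinearMap.comp_apply,
      LinearMap.smul_apply, map_add, map_smul, smul_eq_mul, hT] at h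
    linear_combination h / 2
  have hSΩ2 : S (Ω (Ω w)) = ((lam^2+7)*(lam^2+7) + 16*(lam^2-1) - 16*(ν*ν))
      • (T u ⊗ₜ[ℂ] (1:ℂ)) := by
    rw [hΩw]
    simp only [map_add, map_smul, hSΩw, hSΩE2, hSΩE0]
    have e1 : (T (ρ.Y (ρ.X u))) ⊗ₜ[ℂ] (1:ℂ) = T (ρ.Y (ρ.X u)) • ((1:ℂ) ⊗ₜ[ℂ] (1:ℂ)) := by
      rw [TensorProduct.smul_tmul', smul_eq_mul, mul_one]
    have e2 : (T (ρ.X (ρ.Y u))) ⊗ₜ[ℂ] (1:ℂ) = T (ρ.X (ρ.Y u)) • ((1:ℂ) ⊗ₜ[ℂ] (1:ℂ)) := by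
      rw [TensorProduct.smul_tmul', smul_eq_mul, mul_one]
    have e3 : (T u) ⊗ₜ[ℂ] (1:ℂ) = T u • ((1:ℂ) ⊗ₜ[ℂ] (1:ℂ)) := by
      rw [TensorProduct.smul_tmul', smul_eq_mul, mul_one]
    rw [e1, e2, e3]
    match_scalars
    linear_combination (32:ℂ) * hTcas
  -- final assembly
  rw [hPa]
  simp only [map_add, map_sub, map_smul, hSΩ2, hSΩw, hSw]
  have e3 : (T u) ⊗ₜ[ℂ] (1:ℂ) = T u • ((1:ℂ) ⊗ₜ[ℂ] (1:ℂ)) := by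
    rw [TensorProduct.smul_tmul', smul_eq_mul, mul_one]
  rw [e3]
  match_scalars
  simp only [hμa, hμb, hμc]
  rcases hdelta with h | h <;> subst h <;> field_simp <;> ring

/-- **Translation of symmetry breaking via `⊗ ℂ³`**:
`(T ⊗ pr_{F→F'}) ∘ pr_{λ→λ+2δ}(u ⊗ H) = ((λ+δ)² - ν²)/(2λ(λ+δ)) · Tu`. -/
theorem translation_C3 {V : Type*} [AddCommGroup V] [Module ℂ V]
    (ρ : SL2Rep V) (hρ : ρ.IsSl2Rep) (lam ν : ℂ) (delta : ℂ)
    (hdelta : delta = 1 ∨ delta = -1) (hlam0 : lam ≠ 0) (hlamd : lam ≠ -delta)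
    (hcas : ρ.casimir = (lam^2 - 1) • (1 : Module.End ℂ V))
    (P2 P0 Pm2 : Module.End ℂ (V ⊗[ℂ] (Fin 3 → ℂ)))
    (hsum : P2 + P0 + Pm2 = 1)
    (h22 : P2 ∘ₗ P2 = P2) (h00 : P0 ∘ₗ P0 = P0) (hmm : Pm2 ∘ₗ Pm2 = Pm2)
    (h20 : P2 ∘ₗ P0 = 0) (h02 : P0 ∘ₗ P2 = 0)
    (h2m : P2 ∘ₗ Pm2 = 0) (hm2 : Pm2 ∘ₗ P2 = 0)
    (h0m : P0 ∘ₗ Pm2 = 0) (hm0 : Pm2 ∘ₗ P0 = 0)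
    (hc2 : (ρ.tensor adRep).casimir ∘ₗ P2 = ((lam+2)^2 - 1) • P2)
    (hc0 : (ρ.tensor adRep).casimir ∘ₗ P0 = (lam^2 - 1) • P0)
    (hcm : (ρ.tensor adRep).casimir ∘ₗ Pm2 = ((lam-2)^2 - 1) • Pm2)
    (T : V →ₗ[ℂ] ℂ) (hT : ∀ u, T (ρ.H u) = ν * T u)
    (Pdelta : Module.End ℂ (V ⊗[ℂ] (Fin 3 → ℂ)))
    (hPdelta : (delta = 1 ∧ Pdelta = P2) ∨ (delta = -1 ∧ Pdelta = Pm2))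
    (u : V) :
    TensorProduct.map T prFF' (Pdelta (u ⊗ₜ[ℂ] Hvec))
      = (((lam + delta)^2 - ν^2) / (2 * lam * (lam + delta)))
          • ((T u) ⊗ₜ[ℂ] (1:ℂ)) := by
  have hlamd' : lam + delta ≠ 0 := fun h => hlamd (by linear_combination h)
  rcases hPdelta with ⟨hd, hP⟩ | ⟨hd, hP⟩
  · subst hd; rw [hP]
    exact key ρ lam ν 1 (Or.inl rfl) hlam0 hlamd' hcas P2 P0 Pm2 hsum
      (by rw [show lam + 2*(1:ℂ) = lam + 2 by ring]; exact hc2) hc0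
      (by rw [show lam - 2*(1:ℂ) = lam - 2 by ring]; exact hcm) T hT u
  · subst hd; rw [hP]
    exact key ρ lam ν (-1) (Or.inr rfl) hlam0 hlamd' hcas Pm2 P0 P2
      (by rw [← hsum]; abel)
      (by rw [show lam + 2*(-1:ℂ) = lam - 2 by ring]; exact hcm) hc0
      (by rw [show lam - 2*(-1:ℂ) = lam + 2 by ring]; exact hc2) T hT u
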